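/- Let T be a proper binary tree with saturated vertices u and w such that R_T(u) = R_T(w). Let u_1, w_1 be the respective siblings of u and w, u_0, w_0 their respective parents, and assume u_0 is an ancestor of w_0. Suppose R_T(w_1) ≤ R_T(u) − 1. Suppose further that either u_0 is the root of T, or u_0 is not the root, u_0 v_1 v_2 ⋯ v_t is the path from u_0 to the root v_t, and R_T(v_1) ≤ 2 + R_T(w_1). Then the proper binary tree T* obtained from T by deleting the edges uu_0 and w_1w_0 and adding the edges uw_0 and w_1u_0 (i.e., exchanging the subtrees T(u) and T(w_1)) satisfies R(T*) ≥ R(T). -/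

import Mathlib

/-- Proper binary trees: every internal vertex has exactly two children. -/
inductive BTree : Type
  | leaf : BTree
  | node : BTree → BTree → BTree
  deriving DecidableEq

namespace BTree

/-- The rank (protection number) of the root of a proper binary tree:
the minimum distance from the root to a leaf descendant. -/
def rank : BTree → ℕ
  | leaf => 0
  | node l r => min l.rank r.rank + 1

/-- The security of a proper binary tree: the sum of the ranks of all vertices. -/
def security : BTree → ℕ
  | leaf => 0
  | node l r => (node l r).rank + l.security + r.security

/-- The number of leaves. -/
def leafCount : BTree → ℕ
  | leaf => 1
  | node l r => l.leafCount + r.leafCount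

/-- The height: maximum distance from the root to a leaf. -/
def height : BTree → ℕ
  | leaf => 0
  | node l r => max l.height r.height + 1

/-- A tree is complete if all leaves are at the same depth. -/
def IsComplete : BTree → Prop
  | leaf => True
  | node l r => IsComplete l ∧ IsComplete r ∧ l.height = r.height

/-- The subtree at a given position (a list of directions from the root;
`false` = first child, `true` = second child), if the position exists. -/
def subtreeAt : BTree → List Bool → Option BTree
  | t, [] => some t
  | leaf, _ :: _ => none
  | node l _, false :: p => subtreeAt l p
  | node _ r, true :: p => subtreeAt r p

/-- Replace the subtree at a given position by `s`. -/
def replaceAt : BTree → List Bool → BTree → BTree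
  | _, [], s => s
  | leaf, _ :: _, _ => leaf
  | node l r, false :: p, s => node (replaceAt l p s) r
  | node l r, true :: p, s => node l (replaceAt r p s)

/-- The rank of the vertex at position `p` in `T` (rank of a vertex only depends
on the subtree consisting of the vertex and its descendants). -/
def rankAt (T : BTree) (p : List Bool) : ℕ := ((T.subtreeAt p).map rank).getD 0

/-- The vertex at position `p` in `T` is saturated: its subtree is complete, but the
subtree of none of its (proper) ancestors is complete. -/
def Saturated (T : BTree) (p : List Bool) : Prop :=
  (∃ s, T.subtreeAt p = some s ∧ IsComplete s) ∧
  ∀ q s, q <+: p → q ≠ p → T.subtreeAt q = some s → ¬ IsComplete s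

/-- The complete binary tree of height `m` (with `2 ^ m` leaves). -/
def completeTree : ℕ → BTree
  | 0 => leaf
  | m + 1 => node (completeTree m) (completeTree m)

/-- The tree `T_L` for `L = (n₁, …, n_k)`: a binary caterpillar whose spine vertices carry
complete binary trees with `2 ^ nᵢ` leaves. -/
def TL : List ℕ → BTree
  | [] => leaf
  | n :: ns => ns.foldl (fun acc m => node acc (completeTree m)) (completeTree n)

/-- Helper for the almost complete tree: a complete binary tree of height `m`
whose leftmost `r` leaves each receive two leaf children. -/
def buildF : ℕ → ℕ → BTree
  | 0, r => if r = 0 then leaf else node leaf leaf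
  | m + 1, r => node (buildF m (min r (2 ^ m))) (buildF m (r - 2 ^ m))

/-- The almost complete ("good") tree `F(ℓ)` on `ℓ` leaves. -/
def F (ℓ : ℕ) : BTree := buildF (Nat.log 2 ℓ) (ℓ - 2 ^ Nat.log 2 ℓ)

end BTree

namespace BTree

theorem subtreeAt_append (T : BTree) (p q : List Bool) :
    T.subtreeAt (p ++ q) = (T.subtreeAt p).bind (fun s => s.subtreeAt q) := by
  induction p generalizing T with
  | nil => simp [subtreeAt]
  | cons d p ih =>
    cases T with
    | leaf => simp [subtreeAt]
    | node l r => cases d <;> simp [subtreeAt, ih]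

theorem subtreeAt_append_some {T s : BTree} {p q : List Bool}
    (h : T.subtreeAt (p ++ q) = some s) :
    ∃ A, T.subtreeAt p = some A ∧ A.subtreeAt q = some s := by
  rw [subtreeAt_append] at h
  cases hO : T.subtreeAt p with
  | none => rw [hO] at h; simp at h
  | some A => rw [hO] at h; exact ⟨A, rfl, h⟩

theorem replaceAt_append (T A s : BTree) (p q : List Bool) (h : T.subtreeAt p = some A) :
    T.replaceAt (p ++ q) s = T.replaceAt p (A.replaceAt q s) := by
  induction p generalizing T with
  | nil =>
    simp [subtreeAt] at h
    subst h
    simp [replaceAt]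
  | cons d p ih =>
    cases T with
    | leaf => simp [subtreeAt] at h
    | node l r =>
      cases d <;> simp only [subtreeAt] at h <;> simp [replaceAt, ih _ h]

theorem subtreeAt_replaceAt_self (T A s : BTree) (p : List Bool) (h : T.subtreeAt p = some A) :
    (T.replaceAt p s).subtreeAt p = some s := by
  induction p generalizing T with
  | nil => simp [replaceAt, subtreeAt]
  | cons d p ih =>
    cases T with
    | leaf => simp [subtreeAt] at h
    | node l r =>
      cases d <;> simp only [subtreeAt] at h <;> simp [replaceAt, subtreeAt, ih _ h]

theorem replaceAt_replaceAt (T a b : BTree) (p : List Bool) :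
    (T.replaceAt p a).replaceAt p b = T.replaceAt p b := by
  induction p generalizing T with
  | nil => simp [replaceAt]
  | cons d p ih =>
    cases T with
    | leaf => simp [replaceAt]
    | node l r => cases d <;> simp [replaceAt, ih]

theorem sec_replace_mono (C W W' : BTree) (q : List Bool) (h : C.subtreeAt q = some W)
    (hr : W.rank ≤ W'.rank) :
    C.rank ≤ (C.replaceAt q W').rank ∧
      C.security + W'.security ≤ (C.replaceAt q W').security + W.security := by
  induction q generalizing C with
  | nil =>
    simp [subtreeAt] at h
    subst h
    simp [replaceAt]
    omega
  | cons d q ih =>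
    cases C with
    | leaf => simp [subtreeAt] at h
    | node l r =>
      cases d
      · simp only [subtreeAt] at h
        obtain ⟨h1, h2⟩ := ih l h
        simp only [replaceAt, rank, security]
        omega
      · simp only [subtreeAt] at h
        obtain ⟨h1, h2⟩ := ih r h
        simp only [replaceAt, rank, security]
        omega

theorem core_replace (T A A' : BTree) (pu0 : List Bool)
    (hA : T.subtreeAt pu0 = some A)
    (hsec : A.security ≤ A'.security)
    (hdrop : A'.rank < A.rank → pu0 ≠ [] → T.rankAt pu0.dropLast ≤ A'.rank + 1) :
    T.security ≤ (T.replaceAt pu0 A').security := by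
  rcases le_or_gt A.rank A'.rank with hr | hr
  · have h := sec_replace_mono T A A' pu0 hA hr
    omega
  · rcases eq_or_ne pu0 [] with rfl | hne
    · simp [subtreeAt] at hA
      subst hA
      simpa [replaceAt] using hsec
    · obtain ⟨p1, e, rfl⟩ : ∃ p1 e, pu0 = p1 ++ [e] := by
        rcases List.eq_nil_or_concat pu0 with h | ⟨p1, e, h⟩
        · exact absurd h hne
        · exact ⟨p1, e, by rw [h, List.concat_eq_append]⟩
      have hne : p1 ++ [e] ≠ ([] : List Bool) := by simp
      obtain ⟨B, hB, hBe⟩ := subtreeAt_append_some hA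
      have hd : T.rankAt (p1 ++ [e]).dropLast ≤ A'.rank + 1 := hdrop hr hne
      rw [List.dropLast_concat] at hd
      have hrAt : T.rankAt p1 = B.rank := by simp [rankAt, hB]
      rw [hrAt] at hd
      cases B with
      | leaf => cases e <;> simp [subtreeAt] at hBe
      | node l r =>
        cases e
        · simp only [subtreeAt] at hBe
          injection hBe with hl
          subst hl
          have hd' : min l.rank r.rank + 1 ≤ A'.rank + 1 := by simpa [rank] using hd
          have hmono := sec_replace_mono T (node l r) (node A' r) p1 hB
            (by simp only [rank]; omega)
          have heq : T.replaceAt (p1 ++ [false]) A' = T.replaceAt p1 (node A' r) := by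
            rw [replaceAt_append T (node l r) A' p1 [false] hB]
            simp [replaceAt]
          rw [heq]
          have hBsec : (node l r).security ≤ (node A' r).security := by
            simp only [security, rank]; omega
          omega
        · simp only [subtreeAt] at hBe
          injection hBe with hl
          subst hl
          have hd' : min l.rank r.rank + 1 ≤ A'.rank + 1 := by simpa [rank] using hd
          have hmono := sec_replace_mono T (node l r) (node l A') p1 hB
            (by simp only [rank]; omega)
          have heq : T.replaceAt (p1 ++ [true]) A' = T.replaceAt p1 (node l A') := by
            rw [replaceAt_append T (node l r) A' p1 [true] hB]
            simp [replaceAt]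
          rw [heq]
          have hBsec : (node l r).security ≤ (node l A').security := by
            simp only [security, rank]; omega
          omega

end BTree


open BTree in
/-- Switching lemma (Lemma sw3): for saturated vertices `u` (at position `pu0 ++ [du]`,
with parent `u₀` at `pu0` and sibling `u₁`) and `w` (at position `pw0 ++ [dw]`, with parent
`w₀` at `pw0` and sibling `w₁`) of equal rank, where `u₀` is a (proper) ancestor of `w₀`,
if `R_T(w₁) ≤ R_T(u) − 1` and either `u₀` is the root, or `u₀` is not the root and its
parent `v₁` satisfies `R_T(v₁) ≤ 2 + R_T(w₁)`, then exchanging the subtrees `T(u)` and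
`T(w₁)` does not decrease the security. -/
theorem switching_lemma_three (T tu tw tu1 tw1 : BTree) (pu0 pw0 : List Bool) (du dw : Bool)
    (hu : T.subtreeAt (pu0 ++ [du]) = some tu)
    (hw : T.subtreeAt (pw0 ++ [dw]) = some tw)
    (hu1 : T.subtreeAt (pu0 ++ [!du]) = some tu1)
    (hw1 : T.subtreeAt (pw0 ++ [!dw]) = some tw1)
    (hsatu : Saturated T (pu0 ++ [du]))
    (hsatw : Saturated T (pw0 ++ [dw]))
    (hrank : tu.rank = tw.rank)
    (hanc : pu0 <+: pw0) (hanc' : pu0 ≠ pw0)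
    (hsib : tw1.rank + 1 ≤ tu.rank)
    (hroot : pu0 = [] ∨ (pu0 ≠ [] ∧ T.rankAt pu0.dropLast ≤ 2 + tw1.rank)) :
    T.security ≤ ((T.replaceAt (pu0 ++ [du]) tw1).replaceAt (pw0 ++ [!dw]) tu).security := by
  classical
  -- `tu` is complete
  have hcu : IsComplete tu := by
    obtain ⟨s, hs, hcs⟩ := hsatu.1
    rw [hu] at hs
    injection hs with h
    subst h
    exact hcs
  -- decompose the prefix relation
  obtain ⟨t, ht⟩ := hanc
  have htne : t ≠ [] := by
    rintro rfl
    exact hanc' (by simpa using ht)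
  obtain ⟨d, q', rfl⟩ : ∃ d q', t = d :: q' := by
    cases t with
    | nil => exact absurd rfl htne
    | cons a b => exact ⟨a, b, rfl⟩
  have hdne : d ≠ du := by
    rintro rfl
    refine hsatw.2 (pu0 ++ [d]) tu ⟨q' ++ [dw], by rw [← ht]; simp⟩ ?_ hu hcu
    intro heq
    have hl := congrArg List.length heq
    rw [← ht] at hl
    simp at hl
  have hd : d = !du := by cases d <;> cases du <;> simp_all
  subst hd
  subst ht
  -- extract the node `A` at `pu0`
  obtain ⟨A, hA, hAu⟩ := subtreeAt_append_some hu
  obtain ⟨A2, hA2, hAu1⟩ := subtreeAt_append_some hu1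
  rw [hA] at hA2
  injection hA2 with h2
  subst h2
  -- extract the node `W` at `pw0`
  obtain ⟨W, hW, hWw⟩ := subtreeAt_append_some hw
  obtain ⟨W2, hW2, hW1w⟩ := subtreeAt_append_some hw1
  rw [hW] at hW2
  injection hW2 with h3
  subst h3
  -- structural facts about A
  obtain ⟨hrA, hsA, hsubA, hrepA⟩ :
      A.rank = min tu.rank tu1.rank + 1 ∧
      A.security = A.rank + tu.security + tu1.security ∧
      (∀ z, A.subtreeAt ((!du) :: z) = tu1.subtreeAt z) ∧
      (∀ z s, ((A.replaceAt [du] tw1).replaceAt ((!du) :: z) s).rank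
            = min tw1.rank (tu1.replaceAt z s).rank + 1 ∧
          ((A.replaceAt [du] tw1).replaceAt ((!du) :: z) s).security
            = min tw1.rank (tu1.replaceAt z s).rank + 1 + tw1.security
              + (tu1.replaceAt z s).security) := by
    cases A with
    | leaf => cases du <;> simp [subtreeAt] at hAu
    | node a b =>
      cases du
      · simp only [Bool.not_false] at hAu1
        simp only [subtreeAt] at hAu hAu1
        injection hAu with ha
        injection hAu1 with hb
        subst ha; subst hb
        exact ⟨by simp [rank], by simp [security], fun z => by simp [subtreeAt],
          fun z s => ⟨by simp [replaceAt, rank], by simp [replaceAt, rank, security]⟩⟩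
      · simp only [Bool.not_true] at hAu1
        simp only [subtreeAt] at hAu hAu1
        injection hAu with ha
        injection hAu1 with hb
        subst ha; subst hb
        refine ⟨by simp [rank, Nat.min_comm], ?_, fun z => by simp [subtreeAt], ?_⟩
        · simp only [security, rank]
          omega
        · intro z s
          constructor
          · simp [replaceAt, rank, Nat.min_comm]
          · simp only [Bool.not_true, replaceAt, rank, security]
            omega
  -- structural facts about W
  obtain ⟨hrW, hrW', hsWW'⟩ :
      W.rank = tw1.rank + 1 ∧
      (W.replaceAt [!dw] tu).rank = tu.rank + 1 ∧
      (W.replaceAt [!dw] tu).security + tw1.security + tw1.rank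
        = W.security + tu.security + tu.rank := by
    cases W with
    | leaf => cases dw <;> simp [subtreeAt] at hWw
    | node c e =>
      cases dw
      · simp only [Bool.not_false] at hW1w
        simp only [subtreeAt] at hWw hW1w
        injection hWw with hc
        injection hW1w with he
        subst hc; subst he
        refine ⟨?_, ?_, ?_⟩
        · simp only [rank]; omega
        · simp only [Bool.not_false, replaceAt, rank]; omega
        · simp only [Bool.not_false, replaceAt, rank, security]; omega
      · simp only [Bool.not_true] at hW1w
        simp only [subtreeAt] at hWw hW1w
        injection hWw with hc
        injection hW1w with he
        subst hc; subst he
        refine ⟨?_, ?_, ?_⟩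
        · simp only [rank]; omega
        · simp only [Bool.not_true, replaceAt, rank]; omega
        · simp only [Bool.not_true, replaceAt, rank, security]; omega
  -- `W` sits inside `tu1`
  have hCq : tu1.subtreeAt q' = some W := by
    obtain ⟨A3, hA3, h3⟩ := subtreeAt_append_some (p := pu0) (q := (!du) :: q') hW
    rw [hA] at hA3
    injection hA3 with h4
    subst h4
    rw [hsubA q'] at h3
    exact h3
  -- the monotone replacement inside `tu1`
  have hmono := sec_replace_mono tu1 W (W.replaceAt [!dw] tu) q' hCq (by omega)
  -- rewrite the double replacement as a single replacement at `pu0`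
  have hchain : (T.replaceAt (pu0 ++ [du]) tw1).replaceAt ((pu0 ++ (!du) :: q') ++ [!dw]) tu
      = T.replaceAt pu0 ((A.replaceAt [du] tw1).replaceAt ((!du) :: (q' ++ [!dw])) tu) := by
    rw [replaceAt_append T A tw1 pu0 [du] hA]
    have h1 : (T.replaceAt pu0 (A.replaceAt [du] tw1)).subtreeAt pu0
        = some (A.replaceAt [du] tw1) :=
      subtreeAt_replaceAt_self T A _ pu0 hA
    have h2 : (pu0 ++ (!du) :: q') ++ [!dw] = pu0 ++ ((!du) :: (q' ++ [!dw])) := by simp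
    rw [h2, replaceAt_append _ _ _ _ _ h1, replaceAt_replaceAt]
  rw [hchain]
  obtain ⟨hrA', hsA'⟩ := hrepA (q' ++ [!dw]) tu
  have hsplit2 : tu1.replaceAt (q' ++ [!dw]) tu = tu1.replaceAt q' (W.replaceAt [!dw] tu) :=
    replaceAt_append tu1 W tu q' [!dw] hCq
  rw [hsplit2] at hrA' hsA'
  obtain ⟨hm1, hm2⟩ := hmono
  have hsec : A.security
      ≤ ((A.replaceAt [du] tw1).replaceAt ((!du) :: (q' ++ [!dw])) tu).security := by
    omega
  refine core_replace T A _ pu0 hA hsec ?_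
  intro hlt hne
  rcases hroot with h0 | ⟨_, hb⟩
  · exact absurd h0 hne
  · omega
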